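/- With A satisfying the hypotheses of the previous statement (Z_(p)-flat, integrally closed in A[1/p], Frobenius surjective on A/pA, compatible p-power roots p_m of p up to level N), for all integers n ≥ 1 and i ≥ 0 with n + i ≤ N, setting ξ_{n+i} = [p̄_{n+i}] − p ∈ W_{n+i}(A/pA), the sequence W_n(A/pA) →(multiplication by R^i(ξ_{n+i})) W_n(A/pA) →(θ_n ∘ F^i) A/p^n A → 0 is exact. -/

import Mathlib

/-!
STATEMENT 9.  With `A` a commutative `ℤ_(p)`-algebra which is `ℤ_(p)`-flat, integrally
closed in `A[1/p]`, with surjective Frobenius on `A/pA`, and equipped with compatible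
`p`-power roots `p_m` of `p` up to level `N` : for all integers `n ≥ 1`, `i ≥ 0` with
`n + i ≤ N`, setting `ξ_{n+i} = [p̄_{n+i}] - p ∈ W_{n+i}(A/pA)`, the sequence
`W_n(A/pA) --·R^i(ξ_{n+i})--> W_n(A/pA) --θ_n ∘ F^i--> A/pⁿA → 0` is exact.

Here `R` is the restriction (truncation) of Witt vectors, `F` the Witt vector Frobenius
(which, since `A/pA` has characteristic `p`, is induced on `W_n(A/pA)` and given on
coordinates by `x ↦ x^p`), and `θ_n : W_n(A/pA) → A/pⁿA` is the homomorphism of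
Statement 7, characterized by `θ_n ∘ (truncate n ∘ W(π₁)) = ghostComponent n`.
-/

noncomputable section

/-- The Frobenius endomorphism of truncated Witt vectors of a ring of characteristic `p`,
given on coordinates by the `p`-th power map. -/
def truncFrobenius (p : ℕ) {k : ℕ} {R : Type*} [CommRing R]
    (x : TruncatedWittVector p k R) : TruncatedWittVector p k R :=
  TruncatedWittVector.mk p fun i => x.coeff i ^ p

namespace S9

variable {p : ℕ} [hp : Fact p.Prime] {A : Type*} [CommRing A]

local notation "k" => A ⧸ Ideal.span {(p : A)}
local notation "π" => Ideal.Quotient.mk (Ideal.span {(p : A)})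

section basic

variable [CharP (A ⧸ Ideal.span {(p : A)}) p]

/-- `a ≡ b mod p` implies `a^(p^l) ≡ b^(p^l) mod p^(l+1)`. -/
lemma pow_cong (a b : A) (h : (p : A) ∣ a - b) (l : ℕ) :
    (p : A) ^ (l + 1) ∣ a ^ p ^ l - b ^ p ^ l := by
  induction l with
  | zero => simpa using h
  | succ l ih =>
    have key : (∑ i ∈ Finset.range p, (a ^ p ^ l) ^ i * (b ^ p ^ l) ^ (p - 1 - i)) *
        (a ^ p ^ l - b ^ p ^ l) = (a ^ p ^ l) ^ p - (b ^ p ^ l) ^ p := geom_sum₂_mul _ _ _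
    have hS : (p : A) ∣ ∑ i ∈ Finset.range p, (a ^ p ^ l) ^ i * (b ^ p ^ l) ^ (p - 1 - i) := by
      have hmk : π (a ^ p ^ l) = π (b ^ p ^ l) := by
        have : (p : A) ∣ a ^ p ^ l - b ^ p ^ l := dvd_trans (dvd_pow_self _ (Nat.succ_ne_zero l)) ih
        rw [Ideal.Quotient.mk_eq_mk_iff_sub_mem]
        exact Ideal.mem_span_singleton.2 this
      rw [← Ideal.mem_span_singleton, ← Ideal.Quotient.eq_zero_iff_mem]
      rw [map_sum]
      have : ∀ i ∈ Finset.range p,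
          π ((a ^ p ^ l) ^ i * (b ^ p ^ l) ^ (p - 1 - i)) = π (b ^ p ^ l) ^ (p - 1) := by
        intro i hi
        rw [map_pow, map_pow] at hmk
        simp only [map_mul, map_pow]
        rw [hmk, ← pow_add]
        congr 1
        have := Finset.mem_range.1 hi
        omega
      rw [Finset.sum_congr rfl this, Finset.sum_const, Finset.card_range, nsmul_eq_mul]
      simp [CharP.cast_eq_zero (A ⧸ Ideal.span {(p : A)}) p]
    have : (p : A) ^ (l + 1 + 1) ∣ (∑ i ∈ Finset.range p, (a ^ p ^ l) ^ i *
        (b ^ p ^ l) ^ (p - 1 - i)) * (a ^ p ^ l - b ^ p ^ l) := by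
      rw [pow_succ, mul_comm ((p : A) ^ (l+1))]
      exact mul_dvd_mul hS ih
    rw [key] at this
    rwa [pow_succ p l, pow_mul, pow_mul]

/-- ghost components of Witt vectors with congruent coefficients are congruent. -/
lemma ghost_congr (m : ℕ) (u v : WittVector p A)
    (h : ∀ j, j < m → (p : A) ∣ u.coeff j - v.coeff j) :
    (p : A) ^ m ∣ WittVector.ghostComponent m u - WittVector.ghostComponent m v := by
  rw [WittVector.ghostComponent_apply, WittVector.ghostComponent_apply,
    aeval_wittPolynomial, aeval_wittPolynomial, ← Finset.sum_sub_distrib]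
  apply Finset.dvd_sum
  intro j hj
  have hj' : j ≤ m := by have := Finset.mem_range.1 hj; omega
  rw [← mul_sub]
  rcases lt_or_eq_of_le hj' with hlt | rfl
  · have := pow_cong (u.coeff j) (v.coeff j) (h j hlt) (m - j)
    calc (p : A) ^ m = (p : A) ^ j * (p : A) ^ (m - j) := by rw [← pow_add]; congr 1; omega
    _ ∣ (p : A) ^ j * (u.coeff j ^ p ^ (m - j) - v.coeff j ^ p ^ (m - j)) :=
      mul_dvd_mul_left _ (dvd_trans (pow_dvd_pow _ (by omega)) this)
  · exact Dvd.dvd.mul_right (dvd_refl _) _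

end basic

/-- `p`-torsion-free. -/
lemma ptf (hflat : ∀ x : A, (p : A) * x = 0 → x = 0) :
    ∀ l (x : A), (p : A) ^ l * x = 0 → x = 0 := by
  intro l
  induction l with
  | zero => intro x hx; simpa using hx
  | succ l ih => intro x hx; rw [pow_succ, mul_assoc] at hx; exact hflat x (ih _ hx)

lemma pseq_pow (N : ℕ) (pseq : ℕ → A) (hp0 : pseq 0 = (p : A))
    (hpsucc : ∀ m : ℕ, m < N → pseq (m + 1) ^ p = pseq m) :
    ∀ l m, l + m ≤ N → pseq (l + m) ^ p ^ l = pseq m := by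
  intro l
  induction l with
  | zero => intro m _; simp
  | succ l ih =>
    intro m hm
    have h1 : pseq (l + m + 1) ^ p = pseq (l + m) := hpsucc _ (by omega)
    have : l + 1 + m = (l + m) + 1 := by omega
    rw [this, pow_succ, mul_comm (p ^ l) p, pow_mul, h1, ih m (by omega)]

lemma pseq_pow_self (N : ℕ) (pseq : ℕ → A) (hp0 : pseq 0 = (p : A))
    (hpsucc : ∀ m : ℕ, m < N → pseq (m + 1) ^ p = pseq m) (m : ℕ) (hm : m ≤ N) :
    pseq m ^ p ^ m = (p : A) := by
  have := pseq_pow N pseq hp0 hpsucc m 0 (by omega)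
  simpa [hp0] using this

/-- Root extraction using integral closedness in `A[1/p]`. -/
lemma root_lemma (hflat : ∀ x : A, (p : A) * x = 0 → x = 0)
    (hic : ∀ x : Localization.Away (p : A), IsIntegral A x →
      ∃ a : A, algebraMap A (Localization.Away (p : A)) a = x)
    (e : ℕ) (he : e ≠ 0) (r a b : A) (hre : r ^ e = (p : A)) (hab : a ^ e = (p : A) * b) :
    ∃ c, a = r * c := by
  set L := Localization.Away (p : A)
  have hpnzd : (p : A) ∈ nonZeroDivisors A := by
    rw [mem_nonZeroDivisors_iff]
    refine ⟨hflat, ?_⟩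
    intro x hx
    exact hflat x (by rwa [mul_comm])
  have hM : Submonoid.powers (p : A) ≤ nonZeroDivisors A := by
    intro x hx
    obtain ⟨l, rfl⟩ := hx
    exact pow_mem hpnzd l
  have inj : Function.Injective (algebraMap A L) := IsLocalization.injective L hM
  have up : IsUnit (algebraMap A L (p : A)) :=
    IsLocalization.map_units L ⟨(p : A), Submonoid.mem_powers _⟩
  have ur : IsUnit (algebraMap A L r) := by
    apply isUnit_of_dvd_unit (dvd_pow_self _ he)
    rw [← map_pow, hre]; exact up
  obtain ⟨u, hu⟩ := ur
  set t : L := algebraMap A L a * ↑u⁻¹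
  have huu : ((↑u⁻¹ : L)) ^ e * ((↑u : L)) ^ e = 1 := by
    rw [← mul_pow, Units.inv_mul, one_pow]
  have ht : t ^ e = algebraMap A L b := by
    have h1 : t ^ e * algebraMap A L (r ^ e) = algebraMap A L (a ^ e) := by
      rw [map_pow, ← hu, map_pow]
      simp only [t, mul_pow]
      rw [mul_assoc, huu, mul_one]
    rw [hre, hab, map_mul] at h1
    exact up.mul_left_cancel (by rw [mul_comm (algebraMap A L (p:A)), h1])
  have hint : IsIntegral A t := by
    refine ⟨Polynomial.X ^ e - Polynomial.C b, Polynomial.monic_X_pow_sub_C b he, ?_⟩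
    simp [Polynomial.eval₂_sub, ht]
  obtain ⟨c, hc⟩ := hic t hint
  refine ⟨c, inj ?_⟩
  rw [map_mul, hc, ← hu]
  simp only [t]
  rw [mul_comm ((algebraMap A L) a) (↑u⁻¹ : L), ← mul_assoc, Units.mul_inv, one_mul]

section witt

variable {R : Type*} [CommRing R]

lemma truncFrob_iterate_coeff {m : ℕ} (i : ℕ) (y : TruncatedWittVector p m R) (j : Fin m) :
    ((truncFrobenius p)^[i] y).coeff j = y.coeff j ^ p ^ i := by
  induction i with
  | zero => simp
  | succ i ih =>
    rw [Function.iterate_succ_apply', truncFrobenius, TruncatedWittVector.coeff_mk, ih,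
      ← pow_mul, pow_succ]

lemma versch_iterate_coeff_lt (l : ℕ) (w : WittVector p R) :
    ∀ j, j < l → (WittVector.verschiebung^[l] w).coeff j = 0 := by
  induction l with
  | zero => intro j hj; omega
  | succ l ih =>
    intro j hj
    rw [Function.iterate_succ_apply']
    cases j with
    | zero => exact WittVector.verschiebung_coeff_zero _
    | succ j =>
      rw [WittVector.verschiebung_coeff_succ]
      exact ih j (by omega)

lemma frob_iterate_teich [CharP R p] (l : ℕ) (b : R) :
    WittVector.frobenius^[l] (WittVector.teichmuller p b) =
      WittVector.teichmuller p (b ^ p ^ l) := by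
  induction l with
  | zero => simp
  | succ l ih =>
    rw [Function.iterate_succ_apply', ih, WittVector.frobenius_eq_map_frobenius,
      WittVector.map_teichmuller, frobenius_def, ← pow_mul, pow_succ]

lemma ringhom_iterate_sub {S : Type*} [Ring S] (f : S →+* S) (i : ℕ) (x y : S) :
    (⇑f)^[i] (x - y) = (⇑f)^[i] x - (⇑f)^[i] y := by
  induction i with
  | zero => simp
  | succ i ih => rw [Function.iterate_succ_apply', Function.iterate_succ_apply',
      Function.iterate_succ_apply', ih, map_sub]

lemma frob_iterate_natCast (l c : ℕ) :
    WittVector.frobenius^[l] ((c : WittVector p R)) = c := by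
  induction l with
  | zero => simp
  | succ l ih => rw [Function.iterate_succ_apply', ih, map_natCast]

lemma truncFrob_iterate_truncate [CharP R p] (m i : ℕ) (w : WittVector p R) :
    (truncFrobenius p)^[i] (WittVector.truncate m w) =
      WittVector.truncate m (WittVector.frobenius^[i] w) := by
  apply TruncatedWittVector.ext
  intro j
  rw [truncFrob_iterate_coeff, WittVector.coeff_truncate, WittVector.coeff_truncate,
    WittVector.iterate_frobenius_coeff]

lemma truncFrob_iterate_mul [CharP R p] {m : ℕ} (i : ℕ) (x y : TruncatedWittVector p m R) :
    (truncFrobenius p)^[i] (x * y) =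
      (truncFrobenius p)^[i] x * (truncFrobenius p)^[i] y := by
  obtain ⟨u, rfl⟩ := WittVector.truncate_surjective p m R x
  obtain ⟨v, rfl⟩ := WittVector.truncate_surjective p m R y
  rw [← map_mul, truncFrob_iterate_truncate, truncFrob_iterate_truncate,
    truncFrob_iterate_truncate, iterate_map_mul, map_mul]

lemma truncFrob_iterate_add [CharP R p] {m : ℕ} (i : ℕ) (x y : TruncatedWittVector p m R) :
    (truncFrobenius p)^[i] (x + y) =
      (truncFrobenius p)^[i] x + (truncFrobenius p)^[i] y := by
  obtain ⟨u, rfl⟩ := WittVector.truncate_surjective p m R x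
  obtain ⟨v, rfl⟩ := WittVector.truncate_surjective p m R y
  rw [← map_add, truncFrob_iterate_truncate, truncFrob_iterate_truncate,
    truncFrob_iterate_truncate, iterate_map_add, map_add]

end witt

section gsum

/-- a set-theoretic lift of a truncated Witt vector over `A/p`, with coefficients
raised to the `p^i`-th power. -/
def wlift (s : (A ⧸ Ideal.span {(p : A)}) → A) (m i : ℕ)
    (y : TruncatedWittVector p m (A ⧸ Ideal.span {(p : A)})) : WittVector p A :=
  WittVector.mk p fun j => if j < m then s (y.out.coeff j) ^ p ^ i else 0

/-- the explicit formula for `θ_m (F^i y)`, as an element of `A`. -/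
def gsum (s : (A ⧸ Ideal.span {(p : A)}) → A) (m i : ℕ)
    (y : TruncatedWittVector p m (A ⧸ Ideal.span {(p : A)})) : A :=
  ∑ j ∈ Finset.range m, (p : A) ^ j * s (y.out.coeff j) ^ p ^ (m + i - j)

lemma wlift_coeff (s : (A ⧸ Ideal.span {(p : A)}) → A) (m i : ℕ)
    (y : TruncatedWittVector p m (A ⧸ Ideal.span {(p : A)})) (j : ℕ) :
    (wlift s m i y).coeff j = if j < m then s (y.out.coeff j) ^ p ^ i else 0 := by
  rw [wlift, WittVector.coeff_mk]

lemma gh_wlift (s : (A ⧸ Ideal.span {(p : A)}) → A) (m i : ℕ)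
    (y : TruncatedWittVector p m (A ⧸ Ideal.span {(p : A)})) :
    WittVector.ghostComponent m (wlift s m i y) = gsum s m i y := by
  rw [WittVector.ghostComponent_apply, aeval_wittPolynomial, Finset.sum_range_succ, gsum]
  have hlast : (wlift s m i y).coeff m = 0 := by rw [wlift_coeff, if_neg (lt_irrefl m)]
  rw [hlast]
  have h0 : (0 : A) ^ p ^ (m - m) = 0 := by
    rw [Nat.sub_self, pow_zero, pow_one]
  rw [h0, mul_zero, add_zero]
  apply Finset.sum_congr rfl
  intro j hj
  have hj' : j < m := Finset.mem_range.1 hj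
  have he : i + (m - j) = m + i - j := by omega
  rw [wlift_coeff, if_pos hj', ← pow_mul, ← pow_add, he]

variable [CharP (A ⧸ Ideal.span {(p : A)}) p]

lemma trunc_map_wlift (s : (A ⧸ Ideal.span {(p : A)}) → A)
    (hs : ∀ c, π (s c) = c) (m i : ℕ)
    (y : TruncatedWittVector p m (A ⧸ Ideal.span {(p : A)})) :
    WittVector.truncate m (WittVector.map π (wlift s m i y)) = (truncFrobenius p)^[i] y := by
  apply TruncatedWittVector.ext
  intro j
  rw [WittVector.coeff_truncate, WittVector.map_coeff, truncFrob_iterate_coeff,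
    wlift_coeff, if_pos j.isLt, map_pow, hs, TruncatedWittVector.coeff_out]

lemma coeff_dvd_of_trunc_eq (m : ℕ) (u v : WittVector p A)
    (h : WittVector.truncate m (WittVector.map π u) =
      WittVector.truncate m (WittVector.map π v)) :
    ∀ j, j < m → (p : A) ∣ u.coeff j - v.coeff j := by
  intro j hj
  have h2 := congrArg (fun t => TruncatedWittVector.coeff ⟨j, hj⟩ t) h
  simp only [WittVector.coeff_truncate, WittVector.map_coeff] at h2
  rw [← Ideal.mem_span_singleton]
  exact (Ideal.Quotient.mk_eq_mk_iff_sub_mem _ _).1 h2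

lemma gsum_mul (s : (A ⧸ Ideal.span {(p : A)}) → A) (hs : ∀ c, π (s c) = c) (m i : ℕ)
    (x y : TruncatedWittVector p m (A ⧸ Ideal.span {(p : A)})) :
    (p : A) ^ m ∣ gsum s m i (x * y) - gsum s m i x * gsum s m i y := by
  have h1 : gsum s m i x * gsum s m i y =
      WittVector.ghostComponent m (wlift s m i x * wlift s m i y) := by
    rw [map_mul, gh_wlift, gh_wlift]
  rw [← gh_wlift, h1]
  apply ghost_congr
  apply coeff_dvd_of_trunc_eq
  rw [map_mul (WittVector.map π), map_mul (WittVector.truncate m), trunc_map_wlift s hs,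
    trunc_map_wlift s hs, trunc_map_wlift s hs, ← truncFrob_iterate_mul]

lemma gsum_add (s : (A ⧸ Ideal.span {(p : A)}) → A) (hs : ∀ c, π (s c) = c) (m i : ℕ)
    (x y : TruncatedWittVector p m (A ⧸ Ideal.span {(p : A)})) :
    (p : A) ^ m ∣ gsum s m i (x + y) - (gsum s m i x + gsum s m i y) := by
  have h1 : gsum s m i x + gsum s m i y =
      WittVector.ghostComponent m (wlift s m i x + wlift s m i y) := by
    rw [map_add, gh_wlift, gh_wlift]
  rw [← gh_wlift, h1]
  apply ghost_congr
  apply coeff_dvd_of_trunc_eq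
  rw [map_add (WittVector.map π), map_add (WittVector.truncate m), trunc_map_wlift s hs,
    trunc_map_wlift s hs, trunc_map_wlift s hs, ← truncFrob_iterate_add]

/-- `ξ` at level `m`, with Teichmüller coordinate `p̄_j`. -/
def xiw (pseq : ℕ → A) (m j : ℕ) : TruncatedWittVector p m (A ⧸ Ideal.span {(p : A)}) :=
  WittVector.truncate m (WittVector.teichmuller p (π (pseq j))) -
    (p : TruncatedWittVector p m (A ⧸ Ideal.span {(p : A)}))

lemma xiw_eq (pseq : ℕ → A) (m j : ℕ) :
    xiw pseq m j = WittVector.truncate m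
      (WittVector.teichmuller p (π (pseq j)) - (p : WittVector p (A ⧸ Ideal.span {(p : A)}))) := by
  rw [map_sub, map_natCast, xiw]

lemma gsum_xiw (s : (A ⧸ Ideal.span {(p : A)}) → A) (hs : ∀ c, π (s c) = c)
    (N : ℕ) (pseq : ℕ → A) (hp0 : pseq 0 = (p : A))
    (hpsucc : ∀ m : ℕ, m < N → pseq (m + 1) ^ p = pseq m)
    (m i : ℕ) (hmi : m + i ≤ N) :
    (p : A) ^ m ∣ gsum s m i (xiw pseq m (m + i)) := by
  have hv : WittVector.ghostComponent m
      (WittVector.teichmuller p (pseq m) - (p : WittVector p A)) = 0 := by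
    rw [map_sub, WittVector.ghostComponent_teichmuller, map_natCast,
      pseq_pow_self N pseq hp0 hpsucc m (by omega), sub_self]
  have hc : ∀ j, j < m → (p : A) ∣ (wlift s m i (xiw pseq m (m + i))).coeff j -
      (WittVector.teichmuller p (pseq m) - (p : WittVector p A)).coeff j := by
    apply coeff_dvd_of_trunc_eq
    rw [trunc_map_wlift s hs]
    have hrhs : WittVector.map π (WittVector.teichmuller p (pseq m) - (p : WittVector p A)) =
        WittVector.teichmuller p (π (pseq m)) -
          (p : WittVector p (A ⧸ Ideal.span {(p : A)})) := by
      rw [map_sub, WittVector.map_teichmuller, map_natCast]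
    rw [hrhs, xiw_eq, truncFrob_iterate_truncate]
    congr 1
    rw [ringhom_iterate_sub, frob_iterate_teich, frob_iterate_natCast, ← map_pow]
    have h4 : pseq (m + i) ^ p ^ i = pseq m := by
      have := pseq_pow N pseq hp0 hpsucc i m (by omega)
      rwa [show i + m = m + i by omega] at this
    rw [h4]
  have := ghost_congr m (wlift s m i (xiw pseq m (m + i)))
    (WittVector.teichmuller p (pseq m) - (p : WittVector p A)) hc
  rwa [gh_wlift, hv, sub_zero] at this

lemma gsum_rev (s : (A ⧸ Ideal.span {(p : A)}) → A) (hs : ∀ c, π (s c) = c)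
    (N : ℕ) (pseq : ℕ → A) (hp0 : pseq 0 = (p : A))
    (hpsucc : ∀ m : ℕ, m < N → pseq (m + 1) ^ p = pseq m)
    (m i : ℕ) (hmi : m + i ≤ N)
    (x : TruncatedWittVector p m (A ⧸ Ideal.span {(p : A)})) :
    (p : A) ^ m ∣ gsum s m i (xiw pseq m (m + i) * x) := by
  have h1 := gsum_mul s hs m i (xiw pseq m (m + i)) x
  have h2 := gsum_xiw s hs N pseq hp0 hpsucc m i hmi
  have h3 : gsum s m i (xiw pseq m (m + i) * x) =
      (gsum s m i (xiw pseq m (m + i) * x) -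
        gsum s m i (xiw pseq m (m + i)) * gsum s m i x) +
      gsum s m i (xiw pseq m (m + i)) * gsum s m i x := by ring
  rw [h3]
  exact dvd_add h1 (Dvd.dvd.mul_right h2 _)

lemma out_coeff_lt {m : ℕ} (y : TruncatedWittVector p m (A ⧸ Ideal.span {(p : A)}))
    (j : ℕ) (hj : j < m) : y.out.coeff j = y.coeff ⟨j, hj⟩ :=
  TruncatedWittVector.coeff_out y ⟨j, hj⟩

lemma frob_surj_iter (hfrob : ∀ y : A ⧸ Ideal.span {(p : A)}, ∃ x, x ^ p = y) :
    ∀ l (c : A ⧸ Ideal.span {(p : A)}), ∃ e, e ^ p ^ l = c := by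
  intro l
  induction l with
  | zero => intro c; exact ⟨c, by simp⟩
  | succ l ih =>
    intro c
    obtain ⟨x, hx⟩ := hfrob c
    obtain ⟨e, he⟩ := ih x
    exact ⟨e, by rw [pow_succ, pow_mul, he, hx]⟩

lemma gsum_one (s : (A ⧸ Ideal.span {(p : A)}) → A) (i : ℕ)
    (y : TruncatedWittVector p 1 (A ⧸ Ideal.span {(p : A)})) :
    gsum s 1 i y = s (y.out.coeff 0) ^ p ^ (1 + i) := by
  rw [gsum, Finset.sum_range_one]
  simp

lemma gsum_peel (s : (A ⧸ Ideal.span {(p : A)}) → A) (m i : ℕ)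
    (y : TruncatedWittVector p (m + 1) (A ⧸ Ideal.span {(p : A)})) :
    gsum s (m + 1) i y = gsum s m (i + 1) (TruncatedWittVector.truncate (Nat.le_succ m) y) +
      (p : A) ^ m * s (y.out.coeff m) ^ p ^ (i + 1) := by
  simp only [gsum]
  rw [Finset.sum_range_succ]
  congr 1
  · apply Finset.sum_congr rfl
    intro j hj
    have hj' : j < m := Finset.mem_range.1 hj
    have hc : (TruncatedWittVector.truncate (Nat.le_succ m) y).out.coeff j =
        y.out.coeff j := by
      rw [out_coeff_lt _ j hj', TruncatedWittVector.coeff_truncate,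
        out_coeff_lt _ j (by omega)]
      rfl
    rw [hc, show m + (i + 1) - j = m + 1 + i - j from by omega]
  · rw [show m + 1 + i - m = i + 1 from by omega]

lemma gsum_cons (s : (A ⧸ Ideal.span {(p : A)}) → A) (m i : ℕ)
    (e0 : A ⧸ Ideal.span {(p : A)}) (y' : TruncatedWittVector p m (A ⧸ Ideal.span {(p : A)})) :
    gsum s (m + 1) i (TruncatedWittVector.mk p
        (Fin.cons e0 (fun j => y'.coeff j))) =
      s e0 ^ p ^ (m + 1 + i) + (p : A) * gsum s m i y' := by
  set y := TruncatedWittVector.mk p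
    (Fin.cons (α := fun _ => A ⧸ Ideal.span {(p : A)}) e0 (fun j => y'.coeff j)) with hy
  simp only [gsum]
  rw [Finset.sum_range_succ', Finset.mul_sum, add_comm (s e0 ^ p ^ (m + 1 + i))]
  congr 1
  · apply Finset.sum_congr rfl
    intro j hj
    have hj' : j < m := Finset.mem_range.1 hj
    have hc : y.out.coeff (j + 1) = y'.out.coeff j := by
      rw [out_coeff_lt _ (j+1) (by omega), out_coeff_lt _ j hj', hy,
        TruncatedWittVector.coeff_mk]
      have : (⟨j + 1, by omega⟩ : Fin (m + 1)) = Fin.succ ⟨j, hj'⟩ := by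
        apply Fin.ext; rfl
      rw [this, Fin.cons_succ]
    rw [hc, show m + 1 + i - (j + 1) = m + i - j from by omega, pow_succ', mul_assoc]
  · have hc : y.out.coeff 0 = e0 := by
      rw [out_coeff_lt _ 0 (by omega), hy, TruncatedWittVector.coeff_mk]
      exact Fin.cons_zero _ _
    rw [hc, pow_zero, one_mul, Nat.sub_zero]

lemma coeff_trunc_vteich (m : ℕ) (c : A ⧸ Ideal.span {(p : A)}) (j : Fin (m + 1)) :
    (WittVector.truncate (m + 1)
        (WittVector.verschiebung^[m] (WittVector.teichmuller p c))).coeff j =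
      if (j : ℕ) = m then c else 0 := by
  rw [WittVector.coeff_truncate]
  by_cases h : (j : ℕ) = m
  · rw [if_pos h]
    show (WittVector.verschiebung^[m] (WittVector.teichmuller p c)).coeff (j : ℕ) = c
    rw [h]
    have := WittVector.iterate_verschiebung_coeff (WittVector.teichmuller p c) m 0
    rw [zero_add] at this
    rw [this, WittVector.teichmuller_coeff_zero]
  · rw [if_neg h]
    exact versch_iterate_coeff_lt m _ (j : ℕ) (by omega)

lemma trunc_frob_versch_zero (m : ℕ) (D : WittVector p (A ⧸ Ideal.span {(p : A)})) :
    WittVector.truncate (m + 1) (WittVector.frobenius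
      (WittVector.verschiebung (WittVector.verschiebung^[m] D))) = 0 := by
  apply TruncatedWittVector.ext
  intro j
  rw [WittVector.coeff_truncate, TruncatedWittVector.coeff_zero,
    WittVector.coeff_frobenius_charP]
  have : WittVector.verschiebung (WittVector.verschiebung^[m] D) =
      WittVector.verschiebung^[m + 1] D := (Function.iterate_succ_apply' _ _ _).symm
  rw [this, versch_iterate_coeff_lt (m + 1) D (j : ℕ) j.isLt]
  exact zero_pow hp.out.ne_zero

lemma xiw_mul_vteich (pseq : ℕ → A) (m jdx : ℕ) (d : A ⧸ Ideal.span {(p : A)}) :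
    xiw pseq (m + 1) jdx * WittVector.truncate (m + 1)
        (WittVector.verschiebung^[m] (WittVector.teichmuller p d)) =
      WittVector.truncate (m + 1) (WittVector.verschiebung^[m]
        (WittVector.teichmuller p (d * (π (pseq jdx)) ^ p ^ m))) := by
  set a := π (pseq jdx)
  set D := WittVector.verschiebung^[m] (WittVector.teichmuller p d) with hD
  rw [xiw_eq, ← map_mul]
  have expand : (WittVector.teichmuller p a -
      (p : WittVector p (A ⧸ Ideal.span {(p : A)}))) * D =
      D * WittVector.teichmuller p a - D * (p : WittVector p (A ⧸ Ideal.span {(p : A)})) := by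
    ring
  have h1 : D * WittVector.teichmuller p a =
      WittVector.verschiebung^[m] (WittVector.teichmuller p (d * a ^ p ^ m)) := by
    rw [hD, WittVector.iterate_verschiebung_mul_left, frob_iterate_teich, ← map_mul]
  have h2 : D * (p : WittVector p (A ⧸ Ideal.span {(p : A)})) =
      WittVector.frobenius (WittVector.verschiebung D) := by
    rw [WittVector.frobenius_verschiebung]
  rw [expand, map_sub, h1, h2, hD, trunc_frob_versch_zero, sub_zero]

end gsum

section key

variable [CharP (A ⧸ Ideal.span {(p : A)}) p]

lemma gsum_zero_eq (s : (A ⧸ Ideal.span {(p : A)}) → A) (hs0 : s 0 = 0) (m i : ℕ) :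
    gsum s m i (0 : TruncatedWittVector p m (A ⧸ Ideal.span {(p : A)})) = 0 := by
  apply Finset.sum_eq_zero
  intro j hj
  have hj' : j < m := Finset.mem_range.1 hj
  rw [out_coeff_lt _ j hj', TruncatedWittVector.coeff_zero, hs0,
    zero_pow (pow_ne_zero _ hp.out.ne_zero), mul_zero]

lemma key (hflat : ∀ x : A, (p : A) * x = 0 → x = 0)
    (hic : ∀ x : Localization.Away (p : A), IsIntegral A x →
      ∃ a : A, algebraMap A (Localization.Away (p : A)) a = x)
    (hfrob : ∀ y : A ⧸ Ideal.span {(p : A)}, ∃ x, x ^ p = y)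
    (N : ℕ) (pseq : ℕ → A) (hp0 : pseq 0 = (p : A))
    (hpsucc : ∀ m : ℕ, m < N → pseq (m + 1) ^ p = pseq m)
    (s : (A ⧸ Ideal.span {(p : A)}) → A) (hs : ∀ c, π (s c) = c) (hs0 : s 0 = 0) :
    ∀ n, 1 ≤ n → ∀ i, n + i ≤ N →
      (∀ y : TruncatedWittVector p n (A ⧸ Ideal.span {(p : A)}),
        (p : A) ^ n ∣ gsum s n i y → ∃ x, xiw pseq n (n + i) * x = y) ∧
      (∀ a : A, ∃ y : TruncatedWittVector p n (A ⧸ Ideal.span {(p : A)}),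
        (p : A) ^ n ∣ a - gsum s n i y) := by
  intro n hn
  induction n, hn using Nat.le_induction with
  | base =>
    intro i hi
    constructor
    · intro y hy
      rw [gsum_one, pow_one] at hy
      obtain ⟨b, hb⟩ := hy
      obtain ⟨d, hd⟩ := root_lemma hflat hic (p ^ (1 + i)) (pow_ne_zero _ hp.out.ne_zero)
        (pseq (1 + i)) (s (y.out.coeff 0)) b
        (pseq_pow_self N pseq hp0 hpsucc (1 + i) (by omega)) hb
      refine ⟨WittVector.truncate 1 (WittVector.teichmuller p (π d)), ?_⟩
      have hmul := xiw_mul_vteich pseq 0 (1 + i) (π d)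
      simp only [Function.iterate_zero, id_eq, pow_zero, pow_one, zero_add] at hmul
      rw [hmul]
      apply TruncatedWittVector.ext
      intro j
      have hj0 : (j : ℕ) = 0 := by omega
      have := coeff_trunc_vteich (p := p) 0 (π d * π (pseq (1 + i))) j
      simp only [Function.iterate_zero, id_eq, zero_add] at this
      rw [this, if_pos hj0]
      have : π d * π (pseq (1 + i)) = y.out.coeff 0 := by
        rw [← map_mul, mul_comm, ← hd, hs]
      rw [this, out_coeff_lt _ 0 (by omega)]
      congr 1
      exact Fin.ext hj0.symm
    · intro a
      obtain ⟨e0, he0⟩ := frob_surj_iter hfrob (1 + i) (π a)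
      refine ⟨TruncatedWittVector.mk p (fun _ => e0), ?_⟩
      rw [gsum_one, pow_one]
      have hco : (TruncatedWittVector.mk p
          (fun _ => e0) : TruncatedWittVector p 1 (A ⧸ Ideal.span {(p : A)})).out.coeff 0 = e0 := by
        rw [out_coeff_lt _ 0 (by omega), TruncatedWittVector.coeff_mk]
      rw [hco]
      have hz : π (a - s e0 ^ p ^ (1 + i)) = 0 := by
        rw [map_sub, map_pow, hs, he0, sub_self]
      exact Ideal.mem_span_singleton.1 (Ideal.Quotient.eq_zero_iff_mem.1 hz)
  | succ n hn IH =>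
    intro i hi
    constructor
    · intro y hy
      have hRy : (p : A) ^ n ∣ gsum s n (i + 1)
          (TruncatedWittVector.truncate (Nat.le_succ n) y) := by
        have hpeel := gsum_peel s n i y
        have h1 : (p : A) ^ n ∣ gsum s (n + 1) i y :=
          dvd_trans (pow_dvd_pow _ (Nat.le_succ n)) hy
        have h2 : (p : A) ^ n ∣ (p : A) ^ n * s (y.out.coeff n) ^ p ^ (i + 1) :=
          dvd_mul_right _ _
        have := dvd_sub h1 h2
        rw [hpeel, add_sub_cancel_right] at this
        exact this
      obtain ⟨x', hx'⟩ := (IH (i + 1) (by omega)).1 _ hRy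
      rw [show n + (i + 1) = n + 1 + i from by omega] at hx'
      obtain ⟨w, hw⟩ := WittVector.truncate_surjective p n _ x'
      set x := WittVector.truncate (n + 1) w with hxdef
      have hRx : TruncatedWittVector.truncate (Nat.le_succ n) x = x' := by
        rw [hxdef, TruncatedWittVector.truncate_wittVector_truncate]
        exact hw
      have hRxi : TruncatedWittVector.truncate (Nat.le_succ n)
          (xiw (p := p) pseq (n + 1) (n + 1 + i)) = xiw (p := p) pseq n (n + 1 + i) := by
        rw [xiw_eq, xiw_eq, TruncatedWittVector.truncate_wittVector_truncate]
      set z := y - xiw pseq (n + 1) (n + 1 + i) * x with hz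
      have hRz : TruncatedWittVector.truncate (Nat.le_succ n) z = 0 := by
        rw [hz, map_sub, map_mul, hRxi, hRx, hx', sub_self]
      have hzcoeff : ∀ j : Fin (n + 1), (j : ℕ) < n → z.coeff j = 0 := by
        intro j hj
        have h6 := congrArg (TruncatedWittVector.coeff ⟨(j : ℕ), hj⟩) hRz
        rw [TruncatedWittVector.coeff_truncate, TruncatedWittVector.coeff_zero] at h6
        rwa [show Fin.castLE (Nat.le_succ n) ⟨(j : ℕ), hj⟩ = j from Fin.ext rfl] at h6
      have hgz : (p : A) ^ (n + 1) ∣ gsum s (n + 1) i z := by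
        have hadd := gsum_add s hs (n + 1) i (xiw pseq (n + 1) (n + 1 + i) * x) z
        have hxz : xiw pseq (n + 1) (n + 1 + i) * x + z = y := by rw [hz]; ring
        rw [hxz] at hadd
        have hrev := gsum_rev s hs N pseq hp0 hpsucc (n + 1) i (by omega) x
        have h7 : gsum s (n + 1) i z =
            (gsum s (n + 1) i y - gsum s (n + 1) i (xiw pseq (n + 1) (n + 1 + i) * x)) -
            (gsum s (n + 1) i y - (gsum s (n + 1) i (xiw pseq (n + 1) (n + 1 + i) * x) +
              gsum s (n + 1) i z)) := by ring
        rw [h7]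
        exact dvd_sub (dvd_sub hy hrev) hadd
      set c := z.out.coeff n with hc
      have hgz2 : gsum s (n + 1) i z = (p : A) ^ n * s c ^ p ^ (i + 1) := by
        rw [gsum_peel, hRz, gsum_zero_eq s hs0, zero_add]
      rw [hgz2] at hgz
      obtain ⟨b, hb⟩ := hgz
      have hscb : s c ^ p ^ (i + 1) = (p : A) * b := by
        have h8 : (p : A) ^ n * (s c ^ p ^ (i + 1) - (p : A) * b) = 0 := by
          rw [mul_sub, hb]; ring
        have h9 := ptf hflat n _ h8
        exact sub_eq_zero.1 h9
      obtain ⟨d, hd⟩ := root_lemma hflat hic (p ^ (i + 1)) (pow_ne_zero _ hp.out.ne_zero)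
        (pseq (i + 1)) (s c) b (pseq_pow_self N pseq hp0 hpsucc (i + 1) (by omega)) hscb
      have hcd : c = π d * π (pseq (n + 1 + i)) ^ p ^ n := by
        have h5 : π (pseq (n + 1 + i)) ^ p ^ n = π (pseq (i + 1)) := by
          rw [← map_pow]
          congr 1
          have h10 := pseq_pow N pseq hp0 hpsucc n (i + 1) (by omega)
          rwa [show n + (i + 1) = n + 1 + i from by omega] at h10
        rw [h5, ← hs c, hd, map_mul, mul_comm]
      have hmul := xiw_mul_vteich pseq n (n + 1 + i) (π d)
      have hzeq : z = WittVector.truncate (n + 1)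
          (WittVector.verschiebung^[n] (WittVector.teichmuller p c)) := by
        apply TruncatedWittVector.ext
        intro j
        rw [coeff_trunc_vteich]
        by_cases hj : (j : ℕ) = n
        · rw [if_pos hj, hc, out_coeff_lt _ n (by omega)]
          congr 1
          exact Fin.ext hj
        · rw [if_neg hj]
          exact hzcoeff j (by omega)
      refine ⟨x + WittVector.truncate (n + 1)
        (WittVector.verschiebung^[n] (WittVector.teichmuller p (π d))), ?_⟩
      rw [mul_add, hmul, ← hcd, ← hzeq, hz]
      ring
    · intro a
      obtain ⟨e0, he0⟩ := frob_surj_iter hfrob (n + 1 + i) (π a)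
      have hdvd : (p : A) ∣ a - s e0 ^ p ^ (n + 1 + i) := by
        have hz : π (a - s e0 ^ p ^ (n + 1 + i)) = 0 := by
          rw [map_sub, map_pow, hs, he0, sub_self]
        exact Ideal.mem_span_singleton.1 (Ideal.Quotient.eq_zero_iff_mem.1 hz)
      obtain ⟨b, hbb⟩ := hdvd
      obtain ⟨y', hy'⟩ := (IH i (by omega)).2 b
      refine ⟨TruncatedWittVector.mk p (Fin.cons e0 (fun j => y'.coeff j)), ?_⟩
      rw [gsum_cons]
      have h11 : a - (s e0 ^ p ^ (n + 1 + i) + (p : A) * gsum s n i y') =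
          (p : A) * (b - gsum s n i y') := by
        rw [show a - (s e0 ^ p ^ (n + 1 + i) + (p : A) * gsum s n i y') =
          (a - s e0 ^ p ^ (n + 1 + i)) - (p : A) * gsum s n i y' from by ring, hbb, ← mul_sub]
      rw [h11, pow_succ']
      exact mul_dvd_mul (dvd_refl _) hy'

end key

end S9

theorem statement9 (p : ℕ) [hp : Fact p.Prime]
    (A : Type*) [CommRing A]
    -- `A` is a `ℤ_(p)`-algebra ...
    (hZp : ∀ q : ℕ, q.Prime → q ≠ p → IsUnit (q : A))
    -- ... which is `ℤ_(p)`-flat ...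
    (hflat : ∀ x : A, (p : A) * x = 0 → x = 0)
    -- ... integrally closed in `A[1/p]` ...
    (hic : ∀ x : Localization.Away (p : A), IsIntegral A x →
      ∃ a : A, algebraMap A (Localization.Away (p : A)) a = x)
    -- ... the Frobenius of `A/pA` is surjective ...
    [CharP (A ⧸ Ideal.span {(p : A)}) p]
    (hfrob : ∀ y : A ⧸ Ideal.span {(p : A)}, ∃ x, x ^ p = y)
    -- ... and `(p_m)_{0 ≤ m ≤ N}` is a compatible system of `p`-power roots of `p`
    (N : ℕ) (pseq : ℕ → A) (hp0 : pseq 0 = (p : A))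
    (hpsucc : ∀ m : ℕ, m < N → pseq (m + 1) ^ p = pseq m)
    (n i : ℕ) (hn : 1 ≤ n) (hni : n + i ≤ N)
    -- `θ_n` : the homomorphism of Statement 7
    (θn : TruncatedWittVector p n (A ⧸ Ideal.span {(p : A)}) →+* A ⧸ Ideal.span {(p : A) ^ n})
    (hθ : ∀ x : WittVector p (A ⧸ Ideal.span {(p : A) ^ n}),
      θn (WittVector.truncate n (WittVector.map
          (Ideal.Quotient.factor
            (Ideal.span_singleton_le_span_singleton.2 (dvd_pow_self (p : A) (by omega)))) x))
        = WittVector.ghostComponent n x)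
    -- `ξ_{n+i} = [p̄_{n+i}] - p ∈ W_{n+i}(A/pA)` and its restriction `R^i(ξ_{n+i})`
    (ξ : TruncatedWittVector p n (A ⧸ Ideal.span {(p : A)}))
    (hξ : ξ = TruncatedWittVector.truncate (Nat.le_add_right n i)
      (WittVector.truncate (n + i) (WittVector.teichmuller p
          (Ideal.Quotient.mk (Ideal.span {(p : A)}) (pseq (n + i))))
        - (p : TruncatedWittVector p (n + i) (A ⧸ Ideal.span {(p : A)})))) :
    -- exactness in the middle : `ker (θ_n ∘ F^i) = R^i(ξ_{n+i}) · W_n(A/pA)` ...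
    (∀ y : TruncatedWittVector p n (A ⧸ Ideal.span {(p : A)}),
      θn ((truncFrobenius p)^[i] y) = 0 ↔ ∃ x, ξ * x = y) ∧
    -- ... and surjectivity of `θ_n ∘ F^i`
    Function.Surjective (fun y : TruncatedWittVector p n (A ⧸ Ideal.span {(p : A)}) =>
      θn ((truncFrobenius p)^[i] y)) := by
  classical
  have hsur : Function.Surjective (Ideal.Quotient.mk (Ideal.span {(p : A)})) :=
    Ideal.Quotient.mk_surjective
  set s : (A ⧸ Ideal.span {(p : A)}) → A :=
    fun c => if c = 0 then 0 else Function.surjInv hsur c with hsdef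
  have hs : ∀ c, Ideal.Quotient.mk (Ideal.span {(p : A)}) (s c) = c := by
    intro c
    by_cases hc : c = 0
    · simp [hsdef, hc]
    · simp [hsdef, hc, Function.surjInv_eq hsur c]
  have hs0 : s 0 = 0 := by simp [hsdef]
  have hxi : ξ = S9.xiw (p := p) pseq n (n + i) := by
    rw [hξ, map_sub, TruncatedWittVector.truncate_wittVector_truncate, map_natCast, S9.xiw]
  have htheta : ∀ y : TruncatedWittVector p n (A ⧸ Ideal.span {(p : A)}),
      θn ((truncFrobenius p)^[i] y) =
        Ideal.Quotient.mk (Ideal.span {(p : A) ^ n}) (S9.gsum s n i y) := by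
    intro y
    set W := S9.wlift s n i y with hW
    set mkn := Ideal.Quotient.mk (Ideal.span {(p : A) ^ n}) with hmkn
    set X := WittVector.map mkn W with hX
    have h1 : WittVector.map
        (Ideal.Quotient.factor
          (Ideal.span_singleton_le_span_singleton.2 (dvd_pow_self (p : A) (by omega)))) X =
        WittVector.map (Ideal.Quotient.mk (Ideal.span {(p : A)})) W := by
      apply WittVector.ext
      intro j
      rw [WittVector.map_coeff, hX, WittVector.map_coeff, WittVector.map_coeff, hmkn,
        Ideal.Quotient.factor_mk]
    have h2 := hθ X
    rw [h1, S9.trunc_map_wlift s hs n i y] at h2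
    rw [h2, ← S9.gh_wlift s n i y, ← hW, WittVector.ghostComponent_apply,
      WittVector.ghostComponent_apply, aeval_wittPolynomial, aeval_wittPolynomial, map_sum]
    apply Finset.sum_congr rfl
    intro j hj
    rw [map_mul, map_pow, map_pow, map_natCast, hX, WittVector.map_coeff]
  refine ⟨?_, ?_⟩
  · intro y
    rw [htheta y, hxi]
    constructor
    · intro h0
      have hdvd : (p : A) ^ n ∣ S9.gsum s n i y :=
        Ideal.mem_span_singleton.1 (Ideal.Quotient.eq_zero_iff_mem.1 h0)
      exact (S9.key hflat hic hfrob N pseq hp0 hpsucc s hs hs0 n hn i hni).1 y hdvd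
    · rintro ⟨x, rfl⟩
      exact Ideal.Quotient.eq_zero_iff_mem.2 (Ideal.mem_span_singleton.2
        (S9.gsum_rev s hs N pseq hp0 hpsucc n i hni x))
  · intro b
    obtain ⟨a, rfl⟩ := Ideal.Quotient.mk_surjective b
    obtain ⟨y, hy⟩ := (S9.key hflat hic hfrob N pseq hp0 hpsucc s hs hs0 n hn i hni).2 a
    refine ⟨y, ?_⟩
    show θn ((truncFrobenius p)^[i] y) = _
    rw [htheta y, Ideal.Quotient.mk_eq_mk_iff_sub_mem]
    have h12 := dvd_neg.2 hy
    rw [neg_sub] at h12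
    exact Ideal.mem_span_singleton.2 h12
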